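/- arXiv:2201.06298 — 3 statements merged into one kernel-verified Lean document; each statement's English description precedes it below -/
import Mathlib

section
/- Let Γ : X → ℝ^m be a set-valued map on a compact metric space X with nonempty convex values contained in a compact ball, which is upper hemicontinuous. Then for every ε > 0 there exists a Lipschitz continuous single-valued function g : X → ℝ^m whose graph satisfies Graph(g) ⊂ B(Graph(Γ), ε), i.e., g is a Lipschitz ε-selection of Γ. -/
open Metric Finset

/-- an upper hemicontinuous set-valued map on a compact metric space
with nonempty convex values in a fixed compact ball admits a Lipschitz ε-selection. -/
theorem lipschitz_eps_selection {X : Type*} [MetricSpace X] [CompactSpace X] (m : ℕ)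
    (Γ : X → Set (EuclideanSpace ℝ (Fin m)))
    (hne : ∀ x, (Γ x).Nonempty) (hconv : ∀ x, Convex ℝ (Γ x))
    (R : ℝ) (hbdd : ∀ x, Γ x ⊆ Metric.closedBall 0 R)
    (huhc : ∀ x₀ : X, ∀ V : Set (EuclideanSpace ℝ (Fin m)), IsOpen V → Γ x₀ ⊆ V →
      ∃ δ > 0, ∀ x : X, dist x x₀ < δ → Γ x ⊆ V) :
    ∀ ε > 0, ∃ g : X → EuclideanSpace ℝ (Fin m), ∃ K : NNReal,
      LipschitzWith K g ∧
      ∀ x : X, ∃ p : X × EuclideanSpace ℝ (Fin m), p.2 ∈ Γ p.1 ∧ dist (x, g x) p ≤ ε := by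
  classical
  intro ε hε
  rcases isEmpty_or_nonempty X with hX | hX
  · exact ⟨fun _ => 0, 0, LipschitzWith.const _, fun x => (IsEmpty.false x).elim⟩
  set η := ε / 2 with hηdef
  have hηpos : 0 < η := by positivity
  -- choose moduli of upper hemicontinuity
  have Hδ : ∀ x₀ : X, ∃ δ : ℝ, 0 < δ ∧ δ ≤ ε ∧
      ∀ x, dist x x₀ < δ → Γ x ⊆ Metric.thickening η (Γ x₀) := by
    intro x₀
    obtain ⟨δ, hδ, h⟩ := huhc x₀ _ Metric.isOpen_thickening
      (Metric.self_subset_thickening hηpos _)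
    exact ⟨min δ ε, lt_min hδ hε, min_le_right _ _,
      fun x hx => h x (hx.trans_le (min_le_left _ _))⟩
  choose δ hδpos hδε hδ using Hδ
  -- finite subcover
  obtain ⟨t, ht⟩ := isCompact_univ.elim_finite_subcover
    (fun i : X => Metric.ball i (δ i / 4)) (fun i => Metric.isOpen_ball)
    (fun x _ => Set.mem_iUnion.2 ⟨x, Metric.mem_ball_self (by have := hδpos x; linarith)⟩)
  choose y hy using hne
  set d : X → X → ℝ := fun i x => max (δ i / 4 - dist x i) 0 with hd_def
  set D : X → ℝ := fun x => ∑ i ∈ t, d i x with hD_def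
  set N : X → EuclideanSpace ℝ (Fin m) := fun x => ∑ i ∈ t, d i x • y i with hN_def
  have hd_nonneg : ∀ i x, 0 ≤ d i x := fun i x => le_max_right _ _
  have hd_lip : ∀ i x x', |d i x - d i x'| ≤ dist x x' := by
    intro i x x'
    calc |d i x - d i x'| ≤ |(δ i / 4 - dist x i) - (δ i / 4 - dist x' i)| :=
          abs_max_sub_max_le_abs _ _ _
      _ = |dist x' i - dist x i| := by ring_nf
      _ ≤ dist x' x := abs_dist_sub_le _ _ _
      _ = dist x x' := dist_comm _ _
  have hD_pos : ∀ x, 0 < D x := by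
    intro x
    obtain ⟨i, hit, hxi⟩ := Set.mem_iUnion₂.1 (ht (Set.mem_univ x))
    have hdix : 0 < d i x := lt_max_of_lt_left (by
      simpa [sub_pos] using (Metric.mem_ball.1 hxi))
    exact lt_of_lt_of_le hdix (Finset.single_le_sum (fun j _ => hd_nonneg j x) hit)
  have hD_lip : ∀ x x', |D x - D x'| ≤ (t.card : ℝ) * dist x x' := by
    intro x x'
    calc |D x - D x'| = |∑ i ∈ t, (d i x - d i x')| := by
          rw [hD_def]; rw [Finset.sum_sub_distrib]
      _ ≤ ∑ i ∈ t, |d i x - d i x'| := Finset.abs_sum_le_sum_abs _ _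
      _ ≤ ∑ _i ∈ t, dist x x' := Finset.sum_le_sum (fun i _ => hd_lip i x x')
      _ = (t.card : ℝ) * dist x x' := by rw [Finset.sum_const, nsmul_eq_mul]
  -- uniform lower bound for D
  have hDcont : Continuous D := by
    refine (LipschitzWith.of_dist_le_mul (K := ⟨t.card, Nat.cast_nonneg _⟩)
      (f := D) ?_).continuous
    intro x x'
    rw [Real.dist_eq]
    exact hD_lip x x'
  obtain ⟨x₀, -, hx₀⟩ := isCompact_univ.exists_isMinOn (Set.univ_nonempty)
    hDcont.continuousOn
  set c := D x₀ with hc_def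
  have hc : 0 < c := hD_pos x₀
  have hcle : ∀ x, c ≤ D x := fun x => hx₀ (Set.mem_univ x)
  -- bound on y
  set R' := max R 0 with hR'_def
  have hR' : 0 ≤ R' := le_max_right _ _
  have hyR : ∀ i, ‖y i‖ ≤ R' := fun i =>
    le_trans (mem_closedBall_zero_iff.1 (hbdd i (hy i))) (le_max_left _ _)
  have hN_lip : ∀ x x', ‖N x - N x'‖ ≤ (t.card : ℝ) * R' * dist x x' := by
    intro x x'
    calc ‖N x - N x'‖ = ‖∑ i ∈ t, (d i x - d i x') • y i‖ := by
          rw [hN_def]; rw [← Finset.sum_sub_distrib]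
          congr 1; apply Finset.sum_congr rfl; intro i _; rw [sub_smul]
      _ ≤ ∑ i ∈ t, ‖(d i x - d i x') • y i‖ := norm_sum_le _ _
      _ ≤ ∑ _i ∈ t, R' * dist x x' := by
          refine Finset.sum_le_sum (fun i _ => ?_)
          rw [norm_smul, Real.norm_eq_abs]
          calc |d i x - d i x'| * ‖y i‖ ≤ dist x x' * R' :=
                mul_le_mul (hd_lip i x x') (hyR i) (norm_nonneg _) dist_nonneg
            _ = R' * dist x x' := mul_comm _ _
      _ = (t.card : ℝ) * (R' * dist x x') := by rw [Finset.sum_const, nsmul_eq_mul]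
      _ = (t.card : ℝ) * R' * dist x x' := by ring
  have hN_bdd : ∀ x, ‖N x‖ ≤ D x * R' := by
    intro x
    calc ‖N x‖ ≤ ∑ i ∈ t, ‖d i x • y i‖ := norm_sum_le _ _
      _ ≤ ∑ i ∈ t, d i x * R' := by
          refine Finset.sum_le_sum (fun i _ => ?_)
          rw [norm_smul, Real.norm_eq_abs, abs_of_nonneg (hd_nonneg i x)]
          exact mul_le_mul_of_nonneg_left (hyR i) (hd_nonneg i x)
      _ = D x * R' := by rw [← Finset.sum_mul]
  set g : X → EuclideanSpace ℝ (Fin m) := fun x => (D x)⁻¹ • N x with hg_def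
  set Kr : ℝ := 2 * (t.card : ℝ) * R' / c with hKr_def
  have hKr_nonneg : 0 ≤ Kr := by positivity
  refine ⟨g, Real.toNNReal Kr, ?_, ?_⟩
  · -- Lipschitz
    refine LipschitzWith.of_dist_le_mul ?_
    intro x x'
    have hDx := hD_pos x
    have hDx' := hD_pos x'
    have hcx := hcle x
    have hcx' := hcle x'
    have expand : g x - g x' = (D x)⁻¹ • (N x - N x') + ((D x)⁻¹ - (D x')⁻¹) • N x' := by
      rw [smul_sub, sub_smul]; abel
    rw [dist_eq_norm, expand]
    set e := dist x x' with he_def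
    have he : 0 ≤ e := dist_nonneg
    have hinvle : (D x)⁻¹ ≤ c⁻¹ := by
      exact inv_anti₀ hc hcx
    have step1 : ‖(D x)⁻¹ • (N x - N x')‖ ≤ c⁻¹ * ((t.card : ℝ) * R' * e) := by
      rw [norm_smul, Real.norm_eq_abs, abs_of_pos (inv_pos.2 hDx)]
      exact mul_le_mul hinvle (hN_lip x x') (norm_nonneg _) (by positivity)
    have step2 : ‖((D x)⁻¹ - (D x')⁻¹) • N x'‖ ≤ c⁻¹ * (t.card : ℝ) * R' * e := by
      rw [norm_smul, Real.norm_eq_abs]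
      have h1 : |(D x)⁻¹ - (D x')⁻¹| = |D x' - D x| / (D x * D x') := by
        rw [inv_sub_inv hDx.ne' hDx'.ne', abs_div, abs_of_pos (mul_pos hDx hDx')]
      have h2 : |D x' - D x| ≤ (t.card : ℝ) * e := by
        rw [abs_sub_comm]; exact hD_lip x x'
      have h3 : |(D x)⁻¹ - (D x')⁻¹| ≤ (t.card : ℝ) * e / (c * D x') := by
        rw [h1]
        exact div_le_div₀ (by positivity) h2 (by positivity)
          (mul_le_mul_of_nonneg_right hcx hDx'.le)
      calc |(D x)⁻¹ - (D x')⁻¹| * ‖N x'‖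
          ≤ ((t.card : ℝ) * e / (c * D x')) * (D x' * R') := by
            refine mul_le_mul h3 (hN_bdd x') (norm_nonneg _) (by positivity)
        _ = c⁻¹ * (t.card : ℝ) * R' * e := by
            field_simp
    calc ‖(D x)⁻¹ • (N x - N x') + ((D x)⁻¹ - (D x')⁻¹) • N x'‖
        ≤ ‖(D x)⁻¹ • (N x - N x')‖ + ‖((D x)⁻¹ - (D x')⁻¹) • N x'‖ := norm_add_le _ _
      _ ≤ c⁻¹ * ((t.card : ℝ) * R' * e) + c⁻¹ * (t.card : ℝ) * R' * e :=
          add_le_add step1 step2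
      _ = Kr * e := by rw [hKr_def]; field_simp; ring
      _ ≤ (Real.toNNReal Kr : ℝ) * e := by
          refine mul_le_mul_of_nonneg_right ?_ he
          rw [Real.coe_toNNReal Kr hKr_nonneg]
  · -- the ε-selection property
    intro x
    obtain ⟨i₀, hi₀t, hxi₀⟩ := Set.mem_iUnion₂.1 (ht (Set.mem_univ x))
    set S := t.filter (fun i => 0 < d i x) with hS_def
    have hi₀S : i₀ ∈ S := Finset.mem_filter.2 ⟨hi₀t,
      lt_max_of_lt_left (by simpa [sub_pos] using (Metric.mem_ball.1 hxi₀))⟩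
    obtain ⟨j, hjS, hjmax⟩ := Finset.exists_max_image S δ ⟨i₀, hi₀S⟩
    have hjt : j ∈ t := (Finset.mem_filter.1 hjS).1
    have hdjx : 0 < d j x := (Finset.mem_filter.1 hjS).2
    have hdistxj : dist x j < δ j / 4 := by
      by_contra h
      push_neg at h
      have : d j x = 0 := max_eq_right (by linarith)
      linarith [hdjx, this]
    -- all active points are close to j
    have hsub : ∀ i ∈ S, y i ∈ Metric.thickening η (Γ j) := by
      intro i hiS
      have hdix : 0 < d i x := (Finset.mem_filter.1 hiS).2
      have hdistxi : dist x i < δ i / 4 := by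
        by_contra h
        push_neg at h
        have : d i x = 0 := max_eq_right (by linarith)
        linarith [hdix, this]
      have hij : dist i j < δ j := by
        have hiδ : δ i ≤ δ j := hjmax i hiS
        have := dist_triangle i x j
        rw [dist_comm i x] at this
        have hδj := hδpos j
        linarith
      exact hδ j i hij (hy i)
    -- g x is a convex combination of the active y i
    have hzero : ∀ i ∈ t, ¬ (0 < d i x) → d i x = 0 := fun i _ h =>
      le_antisymm (not_lt.1 h) (hd_nonneg i x)
    have hsumS : ∑ i ∈ S, d i x = D x := by
      rw [hS_def, hD_def]
      exact Finset.sum_filter_of_ne (fun i hi hne =>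
        lt_of_le_of_ne (hd_nonneg i x) (Ne.symm hne))
    have hgx_eq : g x = ∑ i ∈ S, ((D x)⁻¹ * d i x) • y i := by
      rw [hg_def, hN_def]
      simp only []
      rw [Finset.smul_sum]
      rw [hS_def]
      rw [Finset.sum_filter_of_ne]
      · apply Finset.sum_congr rfl
        intro i _
        rw [smul_smul]
      · intro i hi hne
        by_contra h
        exact hne (by rw [hzero i hi h, mul_zero, zero_smul])
    have hgx : g x ∈ Metric.thickening η (Γ j) := by
      rw [hgx_eq]
      refine Convex.sum_mem ((hconv j).thickening η) ?_ ?_ ?_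
      · intro i _
        exact mul_nonneg (inv_nonneg.2 (hD_pos x).le) (hd_nonneg i x)
      · rw [← Finset.mul_sum, hsumS, inv_mul_cancel₀ (hD_pos x).ne']
      · exact hsub
    obtain ⟨z, hz, hdz⟩ := Metric.mem_thickening_iff.1 hgx
    refine ⟨(j, z), hz, ?_⟩
    rw [Prod.dist_eq]
    apply max_le
    · have := hδε j
      simp only []
      linarith
    · simp only []
      rw [hηdef] at hdz
      linarith
end

section
/- Let f : X × U → ℝ be a parameterized convex continuous function, where X ⊂ ℝ^n is compact and U ⊂ ℝ^m is compact convex. Then for every ε > 0 there exist I ∈ ℕ and continuous functions a_i : X → ℝ^m, b_i : X → ℝ (i = 1,…,I) such that sup_{(x,u) ∈ X × U} | max_{1≤i≤I}(⟨a_i(x), u⟩ + b_i(x)) − f(x,u) | < ε. -/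
open scoped RealInnerProductSpace


lemma continuous_csSup_image {α β : Type*} [TopologicalSpace α] [TopologicalSpace β]
    {Φ : α × β → ℝ} (hΦ : Continuous Φ) {U : Set β} (hUc : IsCompact U) (hUne : U.Nonempty) :
    Continuous fun x => sSup ((fun v => Φ (x, v)) '' U) := by
  rw [continuous_iff_continuousAt]
  intro x₀
  rw [ContinuousAt, Metric.tendsto_nhds]
  intro ε hε
  have hNo : IsOpen {q : α × β | |Φ q - Φ (x₀, q.2)| < ε / 2} := by
    have hc : Continuous fun q : α × β => |Φ q - Φ (x₀, q.2)| :=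
      (hΦ.sub (hΦ.comp (continuous_const.prodMk continuous_snd))).abs
    exact isOpen_lt hc continuous_const
  have hsing : IsCompact ({x₀} : Set α) := isCompact_singleton
  have hcontained : ({x₀} : Set α) ×ˢ U ⊆ {q : α × β | |Φ q - Φ (x₀, q.2)| < ε / 2} := by
    rintro ⟨x, v⟩ ⟨hx, hv⟩
    rw [Set.mem_singleton_iff] at hx
    subst hx
    simpa using half_pos hε
  obtain ⟨W, V, hWo, hVo, hx₀W, hUV, hsub⟩ :=
    generalized_tube_lemma hsing hUc hNo hcontained
  have hx₀W' : x₀ ∈ W := hx₀W rfl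
  filter_upwards [hWo.mem_nhds hx₀W'] with x hx
  have key : ∀ v ∈ U, |Φ (x, v) - Φ (x₀, v)| < ε / 2 := fun v hv =>
    hsub ⟨hx, hUV hv⟩
  have bdd : ∀ y : α, BddAbove ((fun v => Φ (y, v)) '' U) := fun y =>
    (hUc.image (hΦ.comp (Continuous.prodMk_right y))).bddAbove
  have ne : ∀ y : α, ((fun v => Φ (y, v)) '' U).Nonempty := fun y => hUne.image _
  have h1 : sSup ((fun v => Φ (x, v)) '' U) ≤ sSup ((fun v => Φ (x₀, v)) '' U) + ε / 2 := by
    refine csSup_le (ne x) ?_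
    rintro r ⟨v, hv, rfl⟩
    have := (abs_lt.mp (key v hv)).2
    have h2 : Φ (x₀, v) ≤ sSup ((fun v => Φ (x₀, v)) '' U) :=
      le_csSup (bdd x₀) (Set.mem_image_of_mem _ hv)
    linarith
  have h2 : sSup ((fun v => Φ (x₀, v)) '' U) ≤ sSup ((fun v => Φ (x, v)) '' U) + ε / 2 := by
    refine csSup_le (ne x₀) ?_
    rintro r ⟨v, hv, rfl⟩
    have := (abs_lt.mp (key v hv)).1
    have h2 : Φ (x, v) ≤ sSup ((fun v => Φ (x, v)) '' U) :=
      le_csSup (bdd x) (Set.mem_image_of_mem _ hv)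
    linarith
  rw [Real.dist_eq, abs_lt]
  constructor <;> linarith


lemma exists_eps_subgradient {m : ℕ} {U : Set (EuclideanSpace ℝ (Fin m))}
    (hU : IsCompact U) {g : EuclideanSpace ℝ (Fin m) → ℝ} (hg : Continuous g)
    (hgconv : ConvexOn ℝ U g) {u₀ : EuclideanSpace ℝ (Fin m)} (hu₀ : u₀ ∈ U)
    {δ : ℝ} (hδ : 0 < δ) :
    ∃ s : EuclideanSpace ℝ (Fin m), ∀ v ∈ U,
      ⟪s, v⟫ - g v ≤ ⟪s, u₀⟫ - g u₀ + δ := by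
  set E : Set (EuclideanSpace ℝ (Fin m) × ℝ) := {q | q.1 ∈ U ∧ g q.1 ≤ q.2} with hE
  have hEconv : Convex ℝ E := hgconv.convex_epigraph
  have hEclosed : IsClosed E := by
    have h1 : IsClosed {q : EuclideanSpace ℝ (Fin m) × ℝ | q.1 ∈ U} :=
      hU.isClosed.preimage continuous_fst
    have h2 : IsClosed {q : EuclideanSpace ℝ (Fin m) × ℝ | g q.1 ≤ q.2} :=
      isClosed_le (hg.comp continuous_fst) continuous_snd
    exact h1.inter h2
  have hp₀ : (u₀, g u₀ - δ) ∉ E := by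
    rintro ⟨-, hle⟩
    simp only at hle
    linarith
  obtain ⟨φ, α, hφp₀, hφE⟩ := geometric_hahn_banach_point_closed hEconv hEclosed hp₀
  set c := φ (0, 1) with hcdef
  have hφ : ∀ (v : EuclideanSpace ℝ (Fin m)) (t : ℝ), φ (v, t) = φ (v, 0) + t * c := by
    intro v t
    have h : (v, t) = (v, (0 : ℝ)) + t • ((0 : EuclideanSpace ℝ (Fin m)), (1 : ℝ)) := by
      simp [Prod.ext_iff]
    rw [h, map_add, map_smul, smul_eq_mul, hcdef]
  have hcpos : 0 < c := by
    rcases lt_trichotomy c 0 with hc | hc | hc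
    · exfalso
      set T := max (g u₀) ((α - φ (u₀, 0)) / c) with hT
      have h1 : α < φ (u₀, T) := hφE _ ⟨hu₀, le_max_left _ _⟩
      rw [hφ] at h1
      have h2 : (α - φ (u₀, 0)) / c ≤ T := le_max_right _ _
      rw [div_le_iff_of_neg hc] at h2
      linarith
    · exfalso
      have h1 : α < φ (u₀, g u₀) := hφE _ ⟨hu₀, le_rfl⟩
      rw [hφ] at h1
      rw [hφ] at hφp₀
      rw [hc] at h1 hφp₀
      linarith
    · exact hc
  have hcne : c ≠ 0 := ne_of_gt hcpos
  set ψ : EuclideanSpace ℝ (Fin m) →L[ℝ] ℝ :=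
    (-(1 / c)) • (φ.comp (ContinuousLinearMap.inl ℝ (EuclideanSpace ℝ (Fin m)) ℝ)) with hψ
  set s := (InnerProductSpace.toDual ℝ (EuclideanSpace ℝ (Fin m))).symm ψ with hs
  have hsv : ∀ v : EuclideanSpace ℝ (Fin m), ⟪s, v⟫ = -(1 / c) * φ (v, 0) := by
    intro v
    rw [hs, InnerProductSpace.toDual_symm_apply]
    simp [hψ]
  have hsc : ∀ v : EuclideanSpace ℝ (Fin m), ⟪s, v⟫ * c = -φ (v, 0) := by
    intro v
    rw [hsv v]
    field_simp
  refine ⟨s, fun v hv => ?_⟩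
  have h1 : α < φ (v, 0) + g v * c := by rw [← hφ]; exact hφE _ ⟨hv, le_rfl⟩
  have h2 : φ (u₀, 0) + (g u₀ - δ) * c < α := by rw [← hφ]; exact hφp₀
  refine (mul_le_mul_iff_of_pos_right hcpos).mp ?_
  rw [sub_mul, add_mul, sub_mul, hsc v, hsc u₀]
  nlinarith [h1, h2]


/-- PMA networks are parameterized convex universal approximators. -/
theorem pma_universal_approximation (n m : ℕ)
    (X : Set (EuclideanSpace ℝ (Fin n))) (U : Set (EuclideanSpace ℝ (Fin m)))
    (hX : IsCompact X) (hU : IsCompact U) (hUconv : Convex ℝ U)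
    (f : EuclideanSpace ℝ (Fin n) → EuclideanSpace ℝ (Fin m) → ℝ)
    (hf : ContinuousOn (fun p : EuclideanSpace ℝ (Fin n) × EuclideanSpace ℝ (Fin m) =>
      f p.1 p.2) (X ×ˢ U))
    (hconv : ∀ x ∈ X, ConvexOn ℝ U (f x)) :
    ∀ ε > 0, ∃ I : ℕ,
      ∃ a : Fin (I + 1) → EuclideanSpace ℝ (Fin n) → EuclideanSpace ℝ (Fin m),
      ∃ b : Fin (I + 1) → EuclideanSpace ℝ (Fin n) → ℝ,
      (∀ i, Continuous (a i)) ∧ (∀ i, Continuous (b i)) ∧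
      ∀ x ∈ X, ∀ u ∈ U,
        |Finset.univ.sup' Finset.univ_nonempty (fun i => ⟪a i x, u⟫ + b i x) - f x u| < ε := by
  intro ε hε
  by_cases hXne : X.Nonempty
  swap
  · exact ⟨0, fun _ _ => 0, fun _ _ => 0, fun _ => continuous_const,
      fun _ => continuous_const, fun x hx => absurd ⟨x, hx⟩ hXne⟩
  by_cases hUne : U.Nonempty
  swap
  · exact ⟨0, fun _ _ => 0, fun _ _ => 0, fun _ => continuous_const,
      fun _ => continuous_const, fun x _ u hu => absurd ⟨u, hu⟩ hUne⟩
  -- Tietze extension of f to the whole space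
  set K : Set (EuclideanSpace ℝ (Fin n) × EuclideanSpace ℝ (Fin m)) := X ×ˢ U with hKdef
  have hKc : IsCompact K := hX.prod hU
  have hKcl : IsClosed K := hKc.isClosed
  obtain ⟨G, hG⟩ := ContinuousMap.exists_restrict_eq (Y := ℝ) hKcl ⟨K.restrict
    (fun p => f p.1 p.2), hf.restrict⟩
  have hGf : ∀ p ∈ K, G p = f p.1 p.2 := by
    intro p hp
    have := ContinuousMap.congr_fun hG ⟨p, hp⟩
    exact this
  -- the conjugate function
  set conj : EuclideanSpace ℝ (Fin m) → EuclideanSpace ℝ (Fin n) → ℝ :=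
    fun s x => sSup ((fun v => ⟪s, v⟫ - G (x, v)) '' U) with hconjdef
  have hconjcont : ∀ s, Continuous (conj s) := by
    intro s
    exact continuous_csSup_image
      ((continuous_const.inner continuous_snd).sub G.continuous) hU hUne
  have hbdd : ∀ (s : EuclideanSpace ℝ (Fin m)) (x : EuclideanSpace ℝ (Fin n)),
      BddAbove ((fun v => ⟪s, v⟫ - G (x, v)) '' U) := fun s x =>
    (hU.image ((continuous_const.inner continuous_id).sub
      (G.continuous.comp (Continuous.prodMk_right x)))).bddAbove
  -- Fenchel-Young inequality
  have hFY : ∀ (s : EuclideanSpace ℝ (Fin m)) (x : EuclideanSpace ℝ (Fin n)), ∀ u ∈ U,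
      ⟪s, u⟫ - conj s x ≤ G (x, u) := by
    intro s x u hu
    have : ⟪s, u⟫ - G (x, u) ≤ conj s x :=
      le_csSup (hbdd s x) (Set.mem_image_of_mem _ hu)
    linarith
  -- ε/4-subgradients exist at every point of K
  have hsel : ∀ p : EuclideanSpace ℝ (Fin n) × EuclideanSpace ℝ (Fin m),
      ∃ s, p ∈ K → conj s p.1 ≤ ⟪s, p.2⟫ - G p + ε / 4 := by
    intro p
    by_cases hp : p ∈ K
    swap
    · exact ⟨0, fun h => absurd h hp⟩
    obtain ⟨hx₀, hu₀⟩ := hp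
    set g : EuclideanSpace ℝ (Fin m) → ℝ := fun v => G (p.1, v) with hgdef
    have hgcont : Continuous g := G.continuous.comp (Continuous.prodMk_right p.1)
    have hgeq : ∀ v ∈ U, g v = f p.1 v := fun v hv => hGf (p.1, v) ⟨hx₀, hv⟩
    have hgconv : ConvexOn ℝ U g := by
      refine ⟨hUconv, fun v hv w hw a b ha hb hab => ?_⟩
      rw [hgeq v hv, hgeq w hw, hgeq _ (hUconv hv hw ha hb hab)]
      exact (hconv p.1 hx₀).2 hv hw ha hb hab
    obtain ⟨s, hs⟩ := exists_eps_subgradient hU hgcont hgconv hu₀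
      (show (0:ℝ) < ε / 4 by linarith)
    refine ⟨s, fun _ => ?_⟩
    have h1 : conj s p.1 ≤ ⟪s, p.2⟫ - g p.2 + ε / 4 := by
      refine csSup_le (hUne.image _) ?_
      rintro r ⟨v, hv, rfl⟩
      have := hs v hv
      simpa [hgdef] using this
    simpa [hgdef] using h1
  choose S hS using hsel
  -- open neighborhoods on which the chosen slope works up to ε/2
  set V : (EuclideanSpace ℝ (Fin n) × EuclideanSpace ℝ (Fin m)) →
      Set (EuclideanSpace ℝ (Fin n) × EuclideanSpace ℝ (Fin m)) :=
    fun p => {q | G q - ε / 2 < ⟪S p, q.2⟫ - conj (S p) q.1} with hVdef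
  have hVopen : ∀ p, IsOpen (V p) := by
    intro p
    exact isOpen_lt (G.continuous.sub continuous_const)
      ((continuous_const.inner continuous_snd).sub ((hconjcont (S p)).comp continuous_fst))
  have hVmem : ∀ p ∈ K, V p ∈ nhds p := by
    intro p hp
    refine (hVopen p).mem_nhds ?_
    have := hS p hp
    simp only [hVdef, Set.mem_setOf_eq]
    linarith
  obtain ⟨t, htK, hcover⟩ := hKc.elim_nhds_subcover V hVmem
  -- t is nonempty
  have htne : t.Nonempty := by
    obtain ⟨x₀, hx₀⟩ := hXne
    obtain ⟨u₀, hu₀⟩ := hUne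
    have := hcover (Set.mk_mem_prod hx₀ hu₀)
    rw [Set.mem_iUnion₂] at this
    obtain ⟨q, hq, -⟩ := this
    exact ⟨q, hq⟩
  set l := t.toList with hldef
  have hlne : l ≠ [] := by
    rw [hldef, ne_eq, Finset.toList_eq_nil]
    exact htne.ne_empty
  have hlpos : 0 < l.length := List.length_pos_iff.mpr hlne
  have hlen : l.length - 1 + 1 = l.length := Nat.succ_pred_eq_of_pos hlpos
  refine ⟨l.length - 1,
    fun i _ => S (l.get (Fin.cast hlen i)),
    fun i x => -(conj (S (l.get (Fin.cast hlen i))) x),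
    fun i => continuous_const,
    fun i => (hconjcont _).neg, ?_⟩
  intro x hx u hu
  have hKxu : (x, u) ∈ K := Set.mk_mem_prod hx hu
  have hGxu : G (x, u) = f x u := hGf (x, u) hKxu
  rw [abs_lt]
  constructor
  · -- lower bound : -ε < sup - f
    have := hcover hKxu
    rw [Set.mem_iUnion₂] at this
    obtain ⟨q, hq, hqV⟩ := this
    obtain ⟨j, hj⟩ := List.mem_iff_get.mp ((Finset.mem_toList).mpr hq)
    set i : Fin (l.length - 1 + 1) := Fin.cast hlen.symm j with hidef
    have hji : l.get (Fin.cast hlen i) = q := by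
      rw [hidef]
      simpa using hj
    have hterm := Finset.le_sup' (s := (Finset.univ : Finset (Fin (l.length - 1 + 1))))
      (fun i => ⟪S (l.get (Fin.cast hlen i)), u⟫ + -(conj (S (l.get (Fin.cast hlen i))) x))
      (Finset.mem_univ i)
    rw [hji] at hterm
    have hqval : G (x, u) - ε / 2 < ⟪S q, u⟫ - conj (S q) x := hqV
    rw [hGxu] at hqval
    have hsup := hterm.trans_eq (Finset.sup'_congr _ rfl (fun _ _ => rfl))
    linarith [hterm]
  · -- upper bound : sup - f < ε
    have hle : Finset.univ.sup' Finset.univ_nonempty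
        (fun i => ⟪S (l.get (Fin.cast hlen i)), u⟫ +
          -(conj (S (l.get (Fin.cast hlen i))) x)) ≤ f x u := by
      refine Finset.sup'_le _ _ fun i _ => ?_
      have := hFY (S (l.get (Fin.cast hlen i))) x u hu
      rw [hGxu] at this
      linarith
    linarith
end

section
/- Let f : X × U → ℝ be a parameterized convex continuous function on compact X ⊂ ℝ^n and compact convex U ⊂ ℝ^m. Then for every ε > 0 there exist T̄ > 0 such that for all T ∈ (0, T̄) there exist I ∈ ℕ and continuous functions a_i : X → ℝ^m, b_i : X → ℝ with sup_{(x,u)} | T·log(∑_{i=1}^I exp((⟨a_i(x),u⟩ + b_i(x))/T)) − f(x,u) | < ε. -/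
open scoped RealInnerProductSpace

lemma aux_minorant {m : ℕ} {U : Set (EuclideanSpace ℝ (Fin m))} (hUcl : IsClosed U)
    (g : EuclideanSpace ℝ (Fin m) → ℝ) (hg : Continuous g) (hgc : ConvexOn ℝ U g)
    {u₀ : EuclideanSpace ℝ (Fin m)} (hu₀ : u₀ ∈ U) {ε : ℝ} (hε : 0 < ε) :
    ∃ a β, (∀ u ∈ U, ⟪a, u⟫ + β ≤ g u) ∧ g u₀ - ε ≤ ⟪a, u₀⟫ + β := by
  set S : Set (EuclideanSpace ℝ (Fin m) × ℝ) := {p | p.1 ∈ U ∧ g p.1 ≤ p.2} with hS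
  have hSconv : Convex ℝ S := hgc.convex_epigraph
  have hScl : IsClosed S := by
    have h1 : IsClosed {p : EuclideanSpace ℝ (Fin m) × ℝ | p.1 ∈ U} :=
      hUcl.preimage continuous_fst
    have h2 : IsClosed {p : EuclideanSpace ℝ (Fin m) × ℝ | g p.1 ≤ p.2} :=
      isClosed_le (hg.comp continuous_fst) continuous_snd
    exact h1.inter h2
  have hx : (u₀, g u₀ - ε) ∉ S := by
    rintro ⟨-, h⟩
    simp only at h; linarith
  obtain ⟨φ, r, hφS, hφx⟩ := geometric_hahn_banach_closed_point hSconv hScl hx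
  -- decompose φ
  set c : ℝ := φ (0, 1) with hc
  have hdec : ∀ u : EuclideanSpace ℝ (Fin m), ∀ t : ℝ, φ (u, t) = φ (u, 0) + t * c := by
    intro u t
    have : (u, t) = (u, (0:ℝ)) + t • ((0 : EuclideanSpace ℝ (Fin m)), (1:ℝ)) := by
      simp [Prod.ext_iff]
    rw [this, map_add, map_smul, smul_eq_mul]
  have hmem : (u₀, g u₀) ∈ S := ⟨hu₀, le_refl _⟩
  have h1 : φ (u₀, 0) + g u₀ * c < r := by have := hφS _ hmem; rwa [hdec] at this
  have h2 : r < φ (u₀, 0) + (g u₀ - ε) * c := by rwa [hdec] at hφx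
  have hcneg : c < 0 := by nlinarith
  -- affine minorant
  set L : EuclideanSpace ℝ (Fin m) →L[ℝ] ℝ :=
    (-c)⁻¹ • (φ.comp (ContinuousLinearMap.inl ℝ _ ℝ)) with hL
  set a : EuclideanSpace ℝ (Fin m) := (InnerProductSpace.toDual ℝ _).symm L with ha
  have haL : ∀ u, ⟪a, u⟫ = (-c)⁻¹ * φ (u, 0) := by
    intro u
    rw [show (⟪a, u⟫ : ℝ) = L u from InnerProductSpace.toDual_symm_apply]
    simp [hL]
  refine ⟨a, r / c, ?_, ?_⟩
  · intro u hu
    have h3 : φ (u, 0) + g u * c < r := by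
      have := hφS _ (⟨hu, le_refl _⟩ : (u, g u) ∈ S); rwa [hdec] at this
    rw [haL]
    have hcne : c ≠ 0 := ne_of_lt hcneg
    have he : c * c⁻¹ = 1 := mul_inv_cancel₀ hcne
    have hene : c⁻¹ < 0 := inv_lt_zero.mpr hcneg
    rw [div_eq_mul_inv, inv_neg]
    have key := mul_lt_mul_of_pos_left h3 (show (0:ℝ) < -c⁻¹ by linarith)
    have expand : (-c⁻¹) * (φ (u, 0) + g u * c)
        = -(c⁻¹ * φ (u, 0)) - g u * (c * c⁻¹) := by ring
    rw [expand, he, mul_one] at key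
    linarith
  · rw [haL]
    have hcne : c ≠ 0 := ne_of_lt hcneg
    have he : c * c⁻¹ = 1 := mul_inv_cancel₀ hcne
    have hene : c⁻¹ < 0 := inv_lt_zero.mpr hcneg
    rw [div_eq_mul_inv, inv_neg]
    have key := mul_lt_mul_of_pos_left h2 (show (0:ℝ) < -c⁻¹ by linarith)
    have expand : (-c⁻¹) * (φ (u₀, 0) + (g u₀ - ε) * c)
        = -(c⁻¹ * φ (u₀, 0)) - (g u₀ - ε) * (c * c⁻¹) := by ring
    rw [expand, he, mul_one] at key
    linarith


set_option maxHeartbeats 1000000 in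
/-- PLSE networks are parameterized convex universal approximators. -/
theorem plse_universal_approximation (n m : ℕ)
    (X : Set (EuclideanSpace ℝ (Fin n))) (U : Set (EuclideanSpace ℝ (Fin m)))
    (hX : IsCompact X) (hU : IsCompact U) (hUconv : Convex ℝ U)
    (f : EuclideanSpace ℝ (Fin n) → EuclideanSpace ℝ (Fin m) → ℝ)
    (hf : ContinuousOn (fun p : EuclideanSpace ℝ (Fin n) × EuclideanSpace ℝ (Fin m) =>
      f p.1 p.2) (X ×ˢ U))
    (hconv : ∀ x ∈ X, ConvexOn ℝ U (f x)) :
    ∀ ε > 0, ∃ Tbar > (0 : ℝ), ∀ T : ℝ, 0 < T → T < Tbar →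
      ∃ I : ℕ,
      ∃ a : Fin (I + 1) → EuclideanSpace ℝ (Fin n) → EuclideanSpace ℝ (Fin m),
      ∃ b : Fin (I + 1) → EuclideanSpace ℝ (Fin n) → ℝ,
      (∀ i, Continuous (a i)) ∧ (∀ i, Continuous (b i)) ∧
      ∀ x ∈ X, ∀ u ∈ U,
        |T * Real.log (∑ i : Fin (I + 1), Real.exp ((⟪a i x, u⟫ + b i x) / T)) - f x u| < ε := by
  intro ε hε
  -- trivial case : X ×ˢ U empty
  by_cases hne : (X ×ˢ U).Nonempty
  case neg =>
    refine ⟨1, one_pos, fun T hT hT' => ⟨0, fun _ _ => 0, fun _ _ => 0,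
      fun _ => continuous_const, fun _ => continuous_const, fun x hx u hu => ?_⟩⟩
    exact absurd (Set.mk_mem_prod hx hu) (fun h => hne ⟨(x,u), h⟩)
  case pos =>
  set K : Set (EuclideanSpace ℝ (Fin n) × EuclideanSpace ℝ (Fin m)) := X ×ˢ U with hK
  have hKcomp : IsCompact K := hX.prod hU
  have hKcl : IsClosed K := hKcomp.isClosed
  -- Tietze extension
  obtain ⟨F, hFres⟩ := ContinuousMap.exists_restrict_eq (Y := ℝ) hKcl
    (⟨K.restrict (fun p => f p.1 p.2), hf.restrict⟩ : C(K, ℝ))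
  have hFf : ∀ x ∈ X, ∀ u ∈ U, F (x, u) = f x u := by
    intro x hx u hu
    have := ContinuousMap.congr_fun hFres ⟨(x,u), Set.mk_mem_prod hx hu⟩
    exact this
  -- bound M
  obtain ⟨M₀, hM₀⟩ := hKcomp.exists_bound_of_continuousOn F.continuous.continuousOn
  set M : ℝ := max M₀ 0 with hMdef
  have hM0 : (0:ℝ) ≤ M := le_max_right _ _
  have hM : ∀ p ∈ K, |F p| ≤ M := fun p hp => le_trans (by simpa using hM₀ p hp) (le_max_left _ _)
  have h2M : (0:ℝ) < 2*M+1 := by linarith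
  -- uniform continuity
  have huc := hKcomp.uniformContinuousOn_of_continuous F.continuous.continuousOn
  rw [Metric.uniformContinuousOn_iff] at huc
  obtain ⟨δ, hδpos, hδ⟩ := huc (ε/8) (by positivity)
  -- affine minorants at every point of K
  have hmin : ∀ q : K, ∃ A B, (∀ u ∈ U, ⟪A, u⟫ + B ≤ F (q.1.1, u)) ∧
      F q.1 - ε/8 ≤ ⟪A, q.1.2⟫ + B := by
    intro q
    have hxq : q.1.1 ∈ X := q.2.1
    have huq : q.1.2 ∈ U := q.2.2
    have hgcont : Continuous (fun u => F (q.1.1, u)) :=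
      F.continuous.comp (Continuous.prodMk_right _)
    have hgc : ConvexOn ℝ U (fun u => F (q.1.1, u)) := by
      refine ⟨hUconv, fun u hu v hv α β hα hβ hαβ => ?_⟩
      show F (q.1.1, α • u + β • v) ≤ α • F (q.1.1, u) + β • F (q.1.1, v)
      rw [hFf _ hxq _ hu, hFf _ hxq _ hv, hFf _ hxq _ (hUconv hu hv hα hβ hαβ)]
      exact (hconv _ hxq).2 hu hv hα hβ hαβ
    obtain ⟨A, B, h1, h2⟩ := aux_minorant hU.isClosed _ hgcont hgc huq
      (show (0:ℝ) < ε/8 by positivity)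
    exact ⟨A, B, h1, by simpa using h2⟩
  choose A B hAB1 hAB2 using hmin
  -- radii
  set r : K → ℝ := fun q => min δ (min (ε/(8*(‖A q‖+1))) (δ*ε/(8*(2*M+1)))) with hrdef
  have hrpos : ∀ q, 0 < r q := by
    intro q
    have hA1 : (0:ℝ) < ‖A q‖ + 1 := by positivity
    exact lt_min hδpos (lt_min (by positivity) (div_pos (mul_pos hδpos hε) (by linarith)))
  -- finite subcover
  have hcov : K ⊆ ⋃ q : K, Metric.ball (q : _) (r q) := fun p hp =>
    Set.mem_iUnion.2 ⟨⟨p, hp⟩, by simpa using hrpos ⟨p, hp⟩⟩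
  obtain ⟨t, ht⟩ := hKcomp.elim_finite_subcover _ (fun q => Metric.isOpen_ball) hcov
  have htne : t.Nonempty := by
    obtain ⟨p, hp⟩ := hne
    obtain ⟨q, hq, -⟩ := Set.mem_iUnion₂.1 (ht hp)
    exact ⟨q, hq⟩
  set I : ℕ := t.card - 1 with hIdef
  have hcard : t.card = I + 1 := (Nat.succ_pred_eq_of_pos (Finset.card_pos.mpr htne)).symm
  set e : Fin (I+1) → K := fun i => (t.equivFin.symm (Fin.cast hcard.symm i) : {x // x ∈ t}).1
    with hedef
  have hsurj : ∀ q ∈ t, ∃ i, e i = q := by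
    intro q hq
    refine ⟨Fin.cast hcard (t.equivFin ⟨q, hq⟩), ?_⟩
    simp [hedef]
  -- the PLSE data
  set b : Fin (I+1) → EuclideanSpace ℝ (Fin n) → ℝ := fun i x =>
    B (e i) - (2*M+1) * min 1 (dist x (e i).1.1 / δ) with hbdef
  set a : Fin (I+1) → EuclideanSpace ℝ (Fin n) → EuclideanSpace ℝ (Fin m) :=
    fun i _ => A (e i) with hadef
  have hacont : ∀ i, Continuous (a i) := fun i => continuous_const
  have hbcont : ∀ i, Continuous (b i) := by
    intro i
    apply continuous_const.sub
    exact continuous_const.mul (continuous_const.min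
      ((continuous_id.dist continuous_const).div_const δ))
  -- upper bound for every piece
  have hup : ∀ i, ∀ x ∈ X, ∀ u ∈ U, ⟪a i x, u⟫ + b i x ≤ F (x, u) + ε/8 := by
    intro i x hx u hu
    set q := e i
    have hxq : q.1.1 ∈ X := q.2.1
    have hq1 : ⟪A q, u⟫ + B q ≤ F (q.1.1, u) := hAB1 q u hu
    by_cases hcase : dist x q.1.1 < δ
    · have hsnn : 0 ≤ (2*M+1) * min 1 (dist x q.1.1 / δ) := by
        apply mul_nonneg (by linarith)
        exact le_min one_pos.le (by positivity)
      have hdF : dist (F (q.1.1, u)) (F (x, u)) < ε/8 := by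
        apply hδ _ (Set.mk_mem_prod hxq hu) _ (Set.mk_mem_prod hx hu)
        rw [Prod.dist_eq, dist_self]
        exact max_lt ((dist_comm q.1.1 x).trans_lt hcase) hδpos
      rw [Real.dist_eq] at hdF
      have := abs_lt.1 hdF
      simp only [hadef, hbdef]
      linarith [this.1, this.2]
    · push_neg at hcase
      have hmin1 : min 1 (dist x q.1.1 / δ) = 1 :=
        min_eq_left ((one_le_div hδpos).mpr hcase)
      have hb1 : |F (q.1.1, u)| ≤ M := hM _ (Set.mk_mem_prod hxq hu)
      have hb2 : |F (x, u)| ≤ M := hM _ (Set.mk_mem_prod hx hu)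
      rw [abs_le] at hb1 hb2
      simp only [hadef, hbdef, show min 1 (dist x (e i).1.1 / δ) = 1 from hmin1]
      linarith [hb1.1, hb1.2, hb2.1, hb2.2]
  -- lower bound: some piece is large
  have hlow : ∀ x ∈ X, ∀ u ∈ U, ∃ i, F (x, u) - ε/2 ≤ ⟪a i x, u⟫ + b i x := by
    intro x hx u hu
    obtain ⟨q0, hq0t, hq0d⟩ := Set.mem_iUnion₂.1 (ht (Set.mk_mem_prod hx hu))
    obtain ⟨i, hi⟩ := hsurj q0 hq0t
    refine ⟨i, ?_⟩
    set q := e i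
    have hqval : q.1 = q0.1 := by rw [hi]
    have hxq : q.1.1 ∈ X := q.2.1
    have huq : q.1.2 ∈ U := q.2.2
    rw [Metric.mem_ball] at hq0d
    have hdq : dist (x, u) q.1 < r q := by rw [hqval, hi]; exact hq0d
    have hd1 : dist x q.1.1 < r q := by
      refine lt_of_le_of_lt ?_ hdq
      rw [Prod.dist_eq]; exact le_max_left _ _
    have hd2 : dist u q.1.2 < r q := by
      refine lt_of_le_of_lt ?_ hdq
      rw [Prod.dist_eq]; exact le_max_right _ _
    have hrδ : r q ≤ δ := min_le_left _ _
    have hrA : r q ≤ ε/(8*(‖A q‖+1)) := le_trans (min_le_right _ _) (min_le_left _ _)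
    have hrM : r q ≤ δ*ε/(8*(2*M+1)) := le_trans (min_le_right _ _) (min_le_right _ _)
    -- (i) inner product comparison
    have hinner : ⟪A q, q.1.2⟫ - ⟪A q, u⟫ ≤ ε/8 := by
      have h1 : ⟪A q, q.1.2⟫ - ⟪A q, u⟫ = ⟪A q, q.1.2 - u⟫ :=
        (inner_sub_right _ _ _).symm
      have h2 : |⟪A q, q.1.2 - u⟫| ≤ ‖A q‖ * ‖q.1.2 - u‖ :=
        abs_real_inner_le_norm _ _
      have h3 : ‖q.1.2 - u‖ = dist u q.1.2 := by
        rw [dist_eq_norm, norm_sub_rev]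
      have hAnn : (0:ℝ) ≤ ‖A q‖ := norm_nonneg _
      have h4 : ‖A q‖ * dist u q.1.2 ≤ ‖A q‖ * (ε/(8*(‖A q‖+1))) :=
        mul_le_mul_of_nonneg_left (le_trans hd2.le hrA) hAnn
      have h5 : ‖A q‖ * (ε/(8*(‖A q‖+1))) ≤ ε/8 := by
        rw [← mul_div_assoc, div_le_div_iff₀ (by positivity) (by norm_num)]
        nlinarith
      calc ⟪A q, q.1.2⟫ - ⟪A q, u⟫ ≤ |⟪A q, q.1.2 - u⟫| := by
            rw [← h1]; exact le_abs_self _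
        _ ≤ ‖A q‖ * dist u q.1.2 := by rw [← h3]; exact h2
        _ ≤ ε/8 := le_trans h4 h5
    -- (ii) the x-penalty is small
    have hpen : (2*M+1) * min 1 (dist x q.1.1 / δ) ≤ ε/8 := by
      have h1 : min 1 (dist x q.1.1 / δ) ≤ dist x q.1.1 / δ :=
        min_le_right _ _
      have h2 : dist x q.1.1 / δ ≤ (δ*ε/(8*(2*M+1)))/δ :=
        (div_le_div_iff_of_pos_right hδpos).2 (le_trans hd1.le hrM)
      have h3 : (2*M+1) * ((δ*ε/(8*(2*M+1)))/δ) = ε/8 := by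
        field_simp
      calc (2*M+1) * min 1 (dist x q.1.1 / δ)
          ≤ (2*M+1) * ((δ*ε/(8*(2*M+1)))/δ) :=
            mul_le_mul_of_nonneg_left (le_trans h1 h2) (by linarith)
        _ = ε/8 := h3
    -- (iii) minorant nearly touches at q
    have htouch : F q.1 - ε/8 ≤ ⟪A q, q.1.2⟫ + B q := hAB2 q
    -- (iv) uniform continuity between (x,u) and q
    have hdF : dist (F ((x, u))) (F q.1) < ε/8 := by
      apply hδ _ (Set.mk_mem_prod hx hu) _ q.2
      exact lt_of_lt_of_le hdq hrδ
    rw [Real.dist_eq] at hdF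
    have hdF' := (abs_lt.1 hdF).2
    have hqeta : ((q.1.1, q.1.2) : _) = q.1 := by
      exact Prod.mk.eta
    rw [hqeta] at *
    simp only [hadef, hbdef]
    linarith
  -- choose Tbar
  set L : ℝ := Real.log (I+1) with hLdef
  have hL0 : 0 ≤ L := Real.log_nonneg (by exact_mod_cast Nat.one_le_iff_ne_zero.mpr (by omega))
  refine ⟨ε/(8*(L+1)), by positivity, fun T hT hT' => ?_⟩
  refine ⟨I, a, b, hacont, hbcont, fun x hx u hu => ?_⟩
  rw [← hFf x hx u hu]
  set G : ℝ := F (x, u) with hGdef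
  set Ssum : ℝ := ∑ i : Fin (I+1), Real.exp ((⟪a i x, u⟫ + b i x) / T) with hSsumdef
  have hSsumpos : 0 < Ssum := Finset.sum_pos (fun i _ => Real.exp_pos _) Finset.univ_nonempty
  -- upper bound
  have hupper : T * Real.log Ssum ≤ G + ε/4 := by
    have hterm : ∀ i : Fin (I+1), Real.exp ((⟪a i x, u⟫ + b i x) / T) ≤
        Real.exp ((G + ε/8) / T) := by
      intro i
      apply Real.exp_le_exp.2
      exact (div_le_div_iff_of_pos_right hT).2 (hup i x hx u hu)
    have hsum : Ssum ≤ (I+1 : ℝ) * Real.exp ((G + ε/8) / T) := by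
      calc Ssum ≤ (Finset.univ : Finset (Fin (I+1))).card • Real.exp ((G + ε/8) / T) :=
            Finset.sum_le_card_nsmul _ _ _ (fun i _ => hterm i)
        _ = (I+1 : ℝ) * Real.exp ((G + ε/8) / T) := by
            simp [nsmul_eq_mul]
    have hlog : Real.log Ssum ≤ L + (G + ε/8) / T := by
      calc Real.log Ssum ≤ Real.log ((I+1 : ℝ) * Real.exp ((G + ε/8) / T)) :=
            Real.log_le_log hSsumpos hsum
        _ = L + (G + ε/8) / T := by
            rw [Real.log_mul (by positivity) (Real.exp_ne_zero _), Real.log_exp]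
    have hTL : T * L < ε/8 := by
      have h1 : T * L ≤ T * (L+1) := by nlinarith
      have h2 : T * (L+1) < (ε/(8*(L+1))) * (L+1) :=
        mul_lt_mul_of_pos_right hT' (by linarith)
      have h3 : (ε/(8*(L+1))) * (L+1) = ε/8 := by
        field_simp
      linarith
    have := mul_le_mul_of_nonneg_left hlog hT.le
    rw [mul_add, mul_div_cancel₀ _ hT.ne'] at this
    linarith
  -- lower bound
  have hlower : G - ε/2 ≤ T * Real.log Ssum := by
    obtain ⟨i, hi⟩ := hlow x hx u hu
    have h1 : Real.exp ((⟪a i x, u⟫ + b i x) / T) ≤ Ssum := by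
      rw [hSsumdef]
      exact Finset.single_le_sum (f := fun j => Real.exp ((⟪a j x, u⟫ + b j x) / T))
        (fun j _ => (Real.exp_pos _).le) (Finset.mem_univ i)
    have h2 : (⟪a i x, u⟫ + b i x) / T ≤ Real.log Ssum := by
      have := Real.log_le_log (Real.exp_pos _) h1
      rwa [Real.log_exp] at this
    have h3 := mul_le_mul_of_nonneg_left h2 hT.le
    rw [mul_div_cancel₀ _ hT.ne'] at h3
    rw [hGdef]
    exact hi.trans h3
  rw [abs_lt]
  constructor <;> linarith
end
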